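/- Let d ≥ 2, let (U, 𝔘) be a measurable space with a σ-finite measure ν, and let δ₀, R, κ > 0. Let ϱ : [0,∞) → [0,∞) be continuous, nondecreasing, concave, with ϱ(r) > 0 for r > 0 and ϱ(r) ≤ (1+r)²·ϱ(r/(1+r)) for all r > 0. For each k ∈ {1,2,3,…} let b(·,k) : ℝ^d → ℝ^d, σ(·,k) : ℝ^d → ℝ^{d×d}, c(·,k,·) : ℝ^d × U → ℝ^d (with u ↦ c(x,k,u) measurable), and let q_{kl} : ℝ^d → [0,∞) for l ≠ k. Assume: (a) for all k and all x, z with |x| ∨ |z| ≤ R and |x−z| ≤ δ₀: ∫_U min( |c(x,k,u)−c(z,k,u)|², 4|x−z|·|c(x,k,u)−c(z,k,u)| ) ν(du) + 2⟨x−z, b(x,k)−b(z,k)⟩ + ‖σ(x,k)−σ(z,k)‖² ≤ 2κ·|x−z|·ϱ(|x−z|) (‖·‖ the Frobenius norm); (b) for all k and all x, z with |x| ∨ |z| ≤ R: Σ_{l≠k} |q_{kl}(x) − q_{kl}(z)| ≤ κ·ϱ(F(|x−z|)). Then for all k and all x, z with |x| ∨ |z| ≤ R, 0 < |x−z| ≤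 δ₀: (1/2)·tr( (σ(x,k)−σ(z,k))(σ(x,k)−σ(z,k))ᵀ ∇²G(x−z) ) + ⟨b(x,k)−b(z,k), ∇G(x−z)⟩ + ∫_U [ G(x−z+c(x,k,u)−c(z,k,u)) − G(x−z) − ⟨∇G(x−z), c(x,k,u)−c(z,k,u)⟩ ] ν(du) + Σ_{l≠k} |q_{kl}(x) − q_{kl}(z)| ≤ 2κ·ϱ(F(|x−z|)). -/

import Mathlib

open MeasureTheory Matrix
open scoped RealInnerProductSpace

/-- `F r = r / (1 + r)`. -/
noncomputable def F (r : ℝ) : ℝ := r / (1 + r)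

/-- `G w = |w| / (1 + |w|)` on `ℝ^d`. -/
noncomputable def G (d : ℕ) (w : EuclideanSpace ℝ (Fin d)) : ℝ := ‖w‖ / (1 + ‖w‖)

/-- The gradient `∇G`. -/
noncomputable def gradG (d : ℕ) (w : EuclideanSpace ℝ (Fin d)) : EuclideanSpace ℝ (Fin d) :=
  gradient (G d) w

/-- The Hessian matrix `∇²G`. -/
noncomputable def hessG (d : ℕ) (w : EuclideanSpace ℝ (Fin d)) : Matrix (Fin d) (Fin d) ℝ :=
  Matrix.of fun i j =>
    iteratedFDeriv ℝ 2 (G d) w ![EuclideanSpace.single i 1, EuclideanSpace.single j 1]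

/-! ### Auxiliary scalar functions -/

noncomputable def psi (t : ℝ) : ℝ := Real.sqrt t / (1 + Real.sqrt t)
noncomputable def psi1 (t : ℝ) : ℝ := 1 / (2 * Real.sqrt t * (1 + Real.sqrt t) ^ 2)
noncomputable def psi2 (t : ℝ) : ℝ :=
  -(((1 + Real.sqrt t) ^ 2 / Real.sqrt t + 2 * (1 + Real.sqrt t)) /
      (2 * Real.sqrt t * (1 + Real.sqrt t) ^ 2) ^ 2)

lemma sqrt_pos_of_pos' {t : ℝ} (ht : 0 < t) : 0 < Real.sqrt t := Real.sqrt_pos.2 ht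

lemma hasDerivAt_psi {t : ℝ} (ht : 0 < t) : HasDerivAt psi (psi1 t) t := by
  have hs := sqrt_pos_of_pos' ht
  have h1 : (0:ℝ) < 1 + Real.sqrt t := by linarith
  have hsq : HasDerivAt Real.sqrt (1 / (2 * Real.sqrt t)) t := Real.hasDerivAt_sqrt ht.ne'
  have hdiv : HasDerivAt (fun s : ℝ => s / (1 + s))
      ((1 * (1 + Real.sqrt t) - Real.sqrt t * (0 + 1)) / (1 + Real.sqrt t) ^ 2) (Real.sqrt t) :=
    (hasDerivAt_id _).div ((hasDerivAt_const _ 1).add (hasDerivAt_id _)) h1.ne'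
  have := hdiv.comp t hsq
  refine this.congr_deriv ?_
  unfold psi1
  field_simp
  ring

lemma hasDerivAt_psi1 {t : ℝ} (ht : 0 < t) : HasDerivAt psi1 (psi2 t) t := by
  have hs := sqrt_pos_of_pos' ht
  have h1 : (0:ℝ) < 1 + Real.sqrt t := by linarith
  have hsq : HasDerivAt Real.sqrt (1 / (2 * Real.sqrt t)) t := Real.hasDerivAt_sqrt ht.ne'
  have hv : HasDerivAt (fun u : ℝ => 2 * Real.sqrt u * (1 + Real.sqrt u) ^ 2)
      (2 * (1 / (2 * Real.sqrt t)) * (1 + Real.sqrt t) ^ 2 +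
        2 * Real.sqrt t * (2 * (1 + Real.sqrt t) ^ 1 * (0 + 1 / (2 * Real.sqrt t)))) t := by
    exact (hsq.const_mul 2).mul (((hasDerivAt_const t 1).add hsq).pow 2)
  have hvne : 2 * Real.sqrt t * (1 + Real.sqrt t) ^ 2 ≠ 0 := by positivity
  have := hv.inv hvne
  have h2 : psi1 = fun u : ℝ => (2 * Real.sqrt u * (1 + Real.sqrt u) ^ 2)⁻¹ := by
    funext u; simp [psi1, one_div]
  rw [h2]
  refine this.congr_deriv ?_
  unfold psi2
  field_simp
  ring

lemma psi2_nonpos {t : ℝ} (ht : 0 < t) : psi2 t ≤ 0 := by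
  have hs := sqrt_pos_of_pos' ht
  unfold psi2
  have : (0:ℝ) ≤ ((1 + Real.sqrt t) ^ 2 / Real.sqrt t + 2 * (1 + Real.sqrt t)) /
      (2 * Real.sqrt t * (1 + Real.sqrt t) ^ 2) ^ 2 := by positivity
  linarith

lemma psi1_sq {r : ℝ} (hr : 0 ≤ r) : psi1 (r ^ 2) = 1 / (2 * r * (1 + r) ^ 2) := by
  simp [psi1, Real.sqrt_sq hr]

lemma psi1_pos {t : ℝ} (ht : 0 < t) : 0 < psi1 t := by
  have := sqrt_pos_of_pos' ht; unfold psi1; positivity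

/-! ### Derivatives of `G` -/

/-- `w ↦ ⟪w, ·⟫` as a continuous linear map, real case. -/
noncomputable def innerB (E : Type*) [NormedAddCommGroup E] [InnerProductSpace ℝ E] :
    E →L[ℝ] E →L[ℝ] ℝ :=
  LinearMap.mkContinuous
    { toFun := fun w => innerSL ℝ w
      map_add' := fun u v => by ext y; simp [inner_add_left]
      map_smul' := fun a u => by ext y; simp [inner_smul_left] }
    1 (fun w => by simp [innerSL_apply_norm])

@[simp] lemma innerB_apply {E : Type*} [NormedAddCommGroup E] [InnerProductSpace ℝ E]
    (w v : E) : innerB E w v = ⟪w, v⟫ := rfl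

lemma G_eq (d : ℕ) : G d = fun w => psi (‖w‖ ^ 2) := by
  funext w
  simp [G, psi, Real.sqrt_sq (norm_nonneg w)]

lemma hasFDerivAt_normsq {E : Type*} [NormedAddCommGroup E] [InnerProductSpace ℝ E] (w : E) :
    HasFDerivAt (fun y : E => ‖y‖ ^ 2) ((2 : ℝ) • innerSL ℝ w) w := by
  have := (hasStrictFDerivAt_norm_sq w).hasFDerivAt
  convert this using 1
  ext y
  simp [two_smul]

lemma hasFDerivAt_G {d : ℕ} {w : EuclideanSpace ℝ (Fin d)} (hw : w ≠ 0) :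
    HasFDerivAt (G d) ((2 * psi1 (‖w‖ ^ 2)) • innerSL ℝ w) w := by
  have hn : (0:ℝ) < ‖w‖ ^ 2 := by
    have := norm_pos_iff.2 hw; positivity
  have h := (hasDerivAt_psi hn).comp_hasFDerivAt w (hasFDerivAt_normsq w)
  rw [G_eq]
  refine h.congr_fderiv ?_
  ext y
  simp [mul_comm, mul_assoc, mul_left_comm]

lemma gradG_eq {d : ℕ} {w : EuclideanSpace ℝ (Fin d)} (hw : w ≠ 0) :
    gradG d w = (2 * psi1 (‖w‖ ^ 2)) • w := by
  have h : HasGradientAt (G d) ((2 * psi1 (‖w‖ ^ 2)) • w) w := by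
    rw [hasGradientAt_iff_hasFDerivAt]
    refine (hasFDerivAt_G hw).congr_fderiv ?_
    ext y
    simp [InnerProductSpace.toDual_apply_apply, real_inner_smul_left]
  exact h.gradient

lemma hasFDerivAt_fderivG {d : ℕ} {w : EuclideanSpace ℝ (Fin d)} (hw : w ≠ 0) :
    HasFDerivAt (fun y : EuclideanSpace ℝ (Fin d) => (2 * psi1 (‖y‖ ^ 2)) • innerSL ℝ y)
      ((2 * psi1 (‖w‖ ^ 2)) • innerB (EuclideanSpace ℝ (Fin d)) +
        ((2 * psi2 (‖w‖ ^ 2)) • ((2 : ℝ) • innerSL ℝ w)).smulRight (innerSL ℝ w)) w := by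
  have hn : (0:ℝ) < ‖w‖ ^ 2 := by have := norm_pos_iff.2 hw; positivity
  have hc : HasFDerivAt (fun y : EuclideanSpace ℝ (Fin d) => 2 * psi1 (‖y‖ ^ 2))
      ((2 * psi2 (‖w‖ ^ 2)) • ((2 : ℝ) • innerSL ℝ w)) w := by
    exact HasDerivAt.comp_hasFDerivAt (f := fun y : EuclideanSpace ℝ (Fin d) => ‖y‖ ^ 2)
      (h₂ := fun y => 2 * psi1 y) w ((hasDerivAt_psi1 hn).const_mul 2) (hasFDerivAt_normsq w)
  have hf : HasFDerivAt (fun y : EuclideanSpace ℝ (Fin d) => innerSL ℝ y)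
      (innerB (EuclideanSpace ℝ (Fin d))) w := (innerB _).hasFDerivAt
  exact hc.smul hf

lemma fderiv_fderiv_G {d : ℕ} {w : EuclideanSpace ℝ (Fin d)} (hw : w ≠ 0)
    (v1 v2 : EuclideanSpace ℝ (Fin d)) :
    fderiv ℝ (fderiv ℝ (G d)) w v1 v2 =
      4 * psi2 (‖w‖ ^ 2) * (⟪w, v1⟫ * ⟪w, v2⟫) + 2 * psi1 (‖w‖ ^ 2) * ⟪v1, v2⟫ := by
  have hev : fderiv ℝ (G d) =ᶠ[nhds w]
      fun y => (2 * psi1 (‖y‖ ^ 2)) • innerSL ℝ y := by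
    filter_upwards [isOpen_compl_singleton.mem_nhds (by simpa using hw)] with y hy
    exact (hasFDerivAt_G (by simpa using hy)).fderiv
  rw [hev.fderiv_eq, (hasFDerivAt_fderivG hw).fderiv]
  simp
  ring

lemma hessG_eq {d : ℕ} {w : EuclideanSpace ℝ (Fin d)} (hw : w ≠ 0) (i j : Fin d) :
    hessG d w i j = 4 * psi2 (‖w‖ ^ 2) * (w i * w j) +
      2 * psi1 (‖w‖ ^ 2) * (if i = j then 1 else 0) := by
  have h2 := fderiv_fderiv_G hw (EuclideanSpace.single i 1) (EuclideanSpace.single j 1)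
  have : hessG d w i j = fderiv ℝ (fderiv ℝ (G d)) w
      (EuclideanSpace.single i 1) (EuclideanSpace.single j 1) := by
    simp only [hessG, Matrix.of_apply, iteratedFDeriv_two_apply]
    norm_num
  rw [this, h2]
  congr 1
  · congr 1
    rw [EuclideanSpace.inner_single_right, EuclideanSpace.inner_single_right]
    simp [mul_comm]
  · rcases eq_or_ne i j with h | h
    · subst h
      simp
    · rw [EuclideanSpace.inner_single_left]
      simp [EuclideanSpace.single_apply, h, Ne.symm h]

/-! ### Trace identity -/

lemma trace_eval {n : ℕ} (A : Matrix (Fin n) (Fin n) ℝ) (α β : ℝ) (v : Fin n → ℝ)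
    (H : Matrix (Fin n) (Fin n) ℝ)
    (hH : ∀ i j, H i j = α * (v i * v j) + β * (if i = j then 1 else 0)) :
    Matrix.trace (A * Aᵀ * H) =
      α * ∑ j, (∑ i, A i j * v i) ^ 2 + β * ∑ i, ∑ j, A i j ^ 2 := by
  simp only [Matrix.trace, Matrix.diag, Matrix.mul_apply, Matrix.transpose_apply, hH,
    mul_add, Finset.sum_add_distrib, mul_ite, mul_one, mul_zero, Finset.sum_ite_eq,
    Finset.mem_univ, if_true, Finset.sum_mul, Finset.mul_sum, sq]
  congr 1
  · calc (∑ x : Fin n, ∑ y : Fin n, ∑ i : Fin n, A x i * A y i * (α * (v y * v x)))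
        = ∑ x : Fin n, ∑ i : Fin n, ∑ y : Fin n, A x i * A y i * (α * (v y * v x)) := by
          exact Finset.sum_congr rfl fun x _ => Finset.sum_comm
      _ = ∑ i : Fin n, ∑ x : Fin n, ∑ y : Fin n, A x i * A y i * (α * (v y * v x)) :=
          Finset.sum_comm
      _ = ∑ i : Fin n, ∑ y : Fin n, ∑ x : Fin n, A x i * A y i * (α * (v y * v x)) := by
          exact Finset.sum_congr rfl fun i _ => Finset.sum_comm
      _ = ∑ x : Fin n, ∑ y : Fin n, ∑ i : Fin n, α * (A i x * v i * (A y x * v y)) := by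
          exact Finset.sum_congr rfl fun i _ => Finset.sum_congr rfl fun y _ =>
            Finset.sum_congr rfl fun x _ => by ring
  · simp only [Finset.sum_ite_eq', Finset.mem_univ, if_true]
    exact Finset.sum_congr rfl fun x _ => Finset.sum_congr rfl fun i _ => by ring

/-! ### Scalar inequalities -/

set_option maxHeartbeats 1000000 in
lemma scalar_bounds {r s t p : ℝ} (hr : 0 < r) (hs : 0 ≤ s) (ht : 0 ≤ t)
    (hp : 2 * p = s ^ 2 - r ^ 2 - t ^ 2) (hpt : |p| ≤ r * t) (hst : |s - r| ≤ t) :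
    (s/(1+s) - r/(1+r) - p/(r*(1+r)^2) ≤ (1/(2*r*(1+r)^2)) * t^2) ∧
    (s/(1+s) - r/(1+r) - p/(r*(1+r)^2) ≤ (1/(2*r*(1+r)^2)) * (4*r*t)) ∧
    (-(t^2) ≤ s/(1+s) - r/(1+r) - p/(r*(1+r)^2)) ∧
    (-(2*t) ≤ s/(1+s) - r/(1+r) - p/(r*(1+r)^2)) := by
  have h1 : (0:ℝ) < 1 + r := by linarith
  have h2 : (0:ℝ) < 1 + s := by linarith
  have hp' : p = (s^2 - r^2 - t^2)/2 := by linarith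
  subst hp'
  have hq1 : s^2 - r^2 - t^2 ≥ -(2*r*t) := by nlinarith [abs_le.1 hpt]
  have hq2 : s^2 - r^2 - t^2 ≤ 2*r*t := by nlinarith [abs_le.1 hpt]
  have hu : s - r ≤ t := (abs_le.1 hst).2
  have hv : r - s ≤ t := by have := (abs_le.1 hst).1; linarith
  have hd : (0:ℝ) < 2*r*(1+r)^2*(1+s) := by
    have := pow_pos h1 2
    have h3 : (0:ℝ) < 2*r := by linarith
    exact mul_pos (mul_pos h3 this) h2
  have hd2 : (0:ℝ) < 2*r*(1+r)^2 := by
    have := pow_pos h1 2; nlinarith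
  have hsr2 : (s-r)^2 ≤ t^2 := by
    have := sq_abs (s-r)
    nlinarith [abs_nonneg (s-r)]
  refine ⟨?_, ?_, ?_, ?_⟩
  · have key : (1/(2*r*(1+r)^2)) * t^2 - (s/(1+s) - r/(1+r) - ((s^2-r^2-t^2)/2)/(r*(1+r)^2))
        = ((s-r)^2*(1+s+2*r))/(2*r*(1+r)^2*(1+s)) := by
      field_simp
      ring
    have h3 : 0 ≤ ((s-r)^2*(1+s+2*r))/(2*r*(1+r)^2*(1+s)) :=
      div_nonneg (mul_nonneg (sq_nonneg _) (by linarith)) hd.le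
    linarith
  · have key : (1/(2*r*(1+r)^2)) * (4*r*t) - (s/(1+s) - r/(1+r) - ((s^2-r^2-t^2)/2)/(r*(1+r)^2))
        = (4*r*t*(1+s) - (s-r)*(2*r*(1+r)) + (s^2-r^2-t^2)*(1+s))/(2*r*(1+r)^2*(1+s)) := by
      field_simp
      ring
    have hnum : 0 ≤ 4*r*t*(1+s) - (s-r)*(2*r*(1+r)) + (s^2-r^2-t^2)*(1+s) := by
      rcases le_total (s - r) 0 with h | h
      · have k1 := mul_nonneg (mul_nonneg hr.le ht) h2.le
        have k2 := mul_nonneg (by linarith : (0:ℝ) ≤ s^2-r^2-t^2+2*r*t) h2.le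
        have k3 := mul_nonneg (mul_nonneg hr.le h1.le) (neg_nonneg.2 h)
        linarith [k1, k2, k3]
      · have k1 := mul_nonneg (by linarith : (0:ℝ) ≤ s^2-r^2-t^2+2*r*t) h2.le
        have k2 := mul_nonneg (mul_nonneg hr.le h1.le) (by linarith : (0:ℝ) ≤ t - (s-r))
        have k3 := mul_nonneg (mul_nonneg hr.le ht) h
        linarith [k1, k2, k3]
    have h3 : 0 ≤ (4*r*t*(1+s) - (s-r)*(2*r*(1+r)) + (s^2-r^2-t^2)*(1+s))/(2*r*(1+r)^2*(1+s)) :=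
      div_nonneg hnum hd.le
    linarith
  · have haveA : r/(1+r) - s/(1+s) + (s-r)/(1+r)^2 ≤ (s-r)^2 := by
      have key : (s-r)^2 - (r/(1+r) - s/(1+s) + (s-r)/(1+r)^2)
          = (s-r)^2*((1+s)*(1+r)^2-1)/((1+s)*(1+r)^2) := by
        field_simp
        ring
      have h3 : 0 ≤ (s-r)^2*((1+s)*(1+r)^2-1)/((1+s)*(1+r)^2) :=
        div_nonneg (mul_nonneg (sq_nonneg _) (by nlinarith [pow_pos h1 2]))
          (by positivity)
      linarith
    have haveB : ((s^2-r^2-t^2)/2)/(r*(1+r)^2)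
        = (s-r)/(1+r)^2 + ((s-r)^2-t^2)/(2*r*(1+r)^2) := by
      field_simp
      ring
    have haveC : ((s-r)^2-t^2)/(2*r*(1+r)^2) ≤ 0 :=
      div_nonpos_of_nonpos_of_nonneg (by linarith) hd2.le
    rw [haveB]
    linarith [haveA, haveC, hsr2]
  · have haveD : r/(1+r) - s/(1+s) ≤ t := by
      rw [div_sub_div _ _ h1.ne' h2.ne', div_le_iff₀ (mul_pos h1 h2)]
      have k := mul_nonneg ht (by nlinarith [mul_nonneg hr.le hs] : (0:ℝ) ≤ (1+r)*(1+s)-1)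
      nlinarith [k]
    have haveE : ((s^2-r^2-t^2)/2)/(r*(1+r)^2) ≤ t := by
      rw [div_le_iff₀ (by nlinarith [pow_pos h1 2] : (0:ℝ) < r*(1+r)^2)]
      have k := mul_nonneg (mul_nonneg ht hr.le)
        (by nlinarith [sq_nonneg r] : (0:ℝ) ≤ (1+r)^2 - 1)
      nlinarith [k]
    linarith

/-! ### Pointwise Taylor-type bounds for `G` -/

lemma G_taylor {d : ℕ} {w : EuclideanSpace ℝ (Fin d)} (hw : w ≠ 0)
    (h : EuclideanSpace ℝ (Fin d)) :
    (G d (w + h) - G d w - ⟪gradG d w, h⟫ ≤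
      (1/(2*‖w‖*(1+‖w‖)^2)) * min (‖h‖^2) (4*‖w‖*‖h‖)) ∧
    |G d (w + h) - G d w - ⟪gradG d w, h⟫| ≤
      (1 + 1/(2*‖w‖)) * min (‖h‖^2) (4*‖w‖*‖h‖) := by
  set r := ‖w‖ with hrdef
  set s := ‖w + h‖ with hsdef
  set t := ‖h‖ with htdef
  have hr : 0 < r := norm_pos_iff.2 hw
  have hs : 0 ≤ s := norm_nonneg _
  have ht : 0 ≤ t := norm_nonneg _
  have h1 : (0:ℝ) < 1 + r := by linarith
  set p := ⟪w, h⟫ with hpdef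
  have hp : 2 * p = s^2 - r^2 - t^2 := by
    have := norm_add_sq_real w h
    rw [← hsdef, ← hrdef, ← htdef, ← hpdef] at this
    linarith
  have hpt : |p| ≤ r * t := abs_real_inner_le_norm w h
  have hst : |s - r| ≤ t := by
    have := abs_norm_sub_norm_le (w + h) w
    simpa [hsdef, hrdef, htdef] using this
  have hX : G d (w + h) - G d w - ⟪gradG d w, h⟫
      = s/(1+s) - r/(1+r) - p/(r*(1+r)^2) := by
    have hgr : ⟪gradG d w, h⟫ = p/(r*(1+r)^2) := by
      rw [gradG_eq hw, real_inner_smul_left, psi1_sq (norm_nonneg w), ← hrdef, ← hpdef]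
      field_simp
    rw [hgr]
    rfl
  obtain ⟨b1, b2, b3, b4⟩ := scalar_bounds hr hs ht hp hpt hst
  rw [hX]
  have hmin0 : 0 ≤ min (t^2) (4*r*t) := le_min (sq_nonneg t) (by positivity)
  constructor
  · rcases le_total (t^2) (4*r*t) with hm | hm
    · rw [min_eq_left hm]; exact b1
    · rw [min_eq_right hm]; exact b2
  · rw [abs_le]
    have hco : (1:ℝ)/(2*r*(1+r)^2) ≤ 1 + 1/(2*r) := by
      have h4 : (1:ℝ)/(2*r*(1+r)^2) ≤ 1/(2*r) := by
        apply one_div_le_one_div_of_le (by linarith)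
        nlinarith [sq_nonneg r, hr.le]
      linarith
    constructor
    · rcases le_total (t^2) (4*r*t) with hm | hm
      · rw [min_eq_left hm]
        have : -(t^2) ≥ -((1 + 1/(2*r)) * t^2) := by
          have h5 : t^2 ≤ (1 + 1/(2*r)) * t^2 := by
            have h6 : (0:ℝ) ≤ 1/(2*r) := by positivity
            nlinarith [sq_nonneg t]
          linarith
        linarith [b3]
      · rw [min_eq_right hm]
        have : 2*t ≤ (1 + 1/(2*r)) * (4*r*t) := by
          have : (1 + 1/(2*r)) * (4*r*t) = 4*r*t + 2*t := by
            field_simp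
            ring
          rw [this]
          nlinarith [mul_nonneg hr.le ht]
        linarith [b4]
    · rcases le_total (t^2) (4*r*t) with hm | hm
      · rw [min_eq_left hm]
        calc s/(1+s) - r/(1+r) - p/(r*(1+r)^2) ≤ (1/(2*r*(1+r)^2)) * t^2 := b1
          _ ≤ (1 + 1/(2*r)) * t^2 := mul_le_mul_of_nonneg_right hco (sq_nonneg t)
      · rw [min_eq_right hm]
        calc s/(1+s) - r/(1+r) - p/(r*(1+r)^2) ≤ (1/(2*r*(1+r)^2)) * (4*r*t) := b2
          _ ≤ (1 + 1/(2*r)) * (4*r*t) :=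
            mul_le_mul_of_nonneg_right hco (by positivity)

theorem stmt_9 (d : ℕ) (hd : 2 ≤ d)
    {U : Type*} [MeasurableSpace U] (ν : Measure U) [SigmaFinite ν]
    (δ₀ R κ : ℝ) (hδ₀ : 0 < δ₀) (hR : 0 < R) (hκ : 0 < κ)
    (ϱ : ℝ → ℝ) (hϱc : ContinuousOn ϱ (Set.Ici 0)) (hϱm : MonotoneOn ϱ (Set.Ici 0))
    (hϱconc : ConcaveOn ℝ (Set.Ici 0) ϱ) (hϱnn : ∀ r : ℝ, 0 ≤ r → 0 ≤ ϱ r)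
    (hϱpos : ∀ r : ℝ, 0 < r → 0 < ϱ r)
    (hϱF : ∀ r : ℝ, 0 < r → ϱ r ≤ (1 + r) ^ 2 * ϱ (r / (1 + r)))
    (b : EuclideanSpace ℝ (Fin d) → ℕ+ → EuclideanSpace ℝ (Fin d))
    (σ : EuclideanSpace ℝ (Fin d) → ℕ+ → Matrix (Fin d) (Fin d) ℝ)
    (c : EuclideanSpace ℝ (Fin d) → ℕ+ → U → EuclideanSpace ℝ (Fin d))
    (q : ℕ+ → ℕ+ → EuclideanSpace ℝ (Fin d) → ℝ)
    (hmeas : ∀ x k, Measurable (c x k))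
    (hqnn : ∀ (k l : ℕ+), l ≠ k → ∀ x, 0 ≤ q k l x)
    -- (a)
    (hcoef : ∀ (k : ℕ+) (x z : EuclideanSpace ℝ (Fin d)),
      max ‖x‖ ‖z‖ ≤ R → ‖x - z‖ ≤ δ₀ →
      Integrable (fun u =>
        min (‖c x k u - c z k u‖ ^ 2) (4 * ‖x - z‖ * ‖c x k u - c z k u‖)) ν ∧
      (∫ u, min (‖c x k u - c z k u‖ ^ 2) (4 * ‖x - z‖ * ‖c x k u - c z k u‖) ∂ν) +
        2 * ⟪x - z, b x k - b z k⟫ + (∑ i, ∑ j, (σ x k i j - σ z k i j) ^ 2) ≤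
        2 * κ * ‖x - z‖ * ϱ ‖x - z‖)
    -- (b)
    (hq : ∀ (k : ℕ+) (x z : EuclideanSpace ℝ (Fin d)), max ‖x‖ ‖z‖ ≤ R →
      Summable (fun l : {l : ℕ+ // l ≠ k} => |q k l x - q k l z|) ∧
      (∑' l : {l : ℕ+ // l ≠ k}, |q k l x - q k l z|) ≤ κ * ϱ (F ‖x - z‖)) :
    ∀ (k : ℕ+) (x z : EuclideanSpace ℝ (Fin d)),
      max ‖x‖ ‖z‖ ≤ R → 0 < ‖x - z‖ → ‖x - z‖ ≤ δ₀ →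
      (1 / 2) * Matrix.trace ((σ x k - σ z k) * (σ x k - σ z k)ᵀ * hessG d (x - z)) +
        ⟪b x k - b z k, gradG d (x - z)⟫ +
        (∫ u, (G d (x - z + c x k u - c z k u) - G d (x - z) -
          ⟪gradG d (x - z), c x k u - c z k u⟫) ∂ν) +
        (∑' l : {l : ℕ+ // l ≠ k}, |q k l x - q k l z|) ≤
        2 * κ * ϱ (F ‖x - z‖) := by
  intro k x z hRxz hpos hδ
  obtain ⟨hint, hbound⟩ := hcoef k x z hRxz hδ
  have hqb := (hq k x z hRxz).2
  set w := x - z with hwdef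
  have hw : w ≠ 0 := by
    rw [hwdef]; exact fun h0 => by simp [hwdef, h0] at hpos
  set r := ‖w‖ with hrdef
  have hr : 0 < r := hpos
  have h1r : (0:ℝ) < 1 + r := by linarith
  have hQ : (0:ℝ) < ‖w‖ ^ 2 := by positivity
  set P := psi1 (‖w‖ ^ 2) with hPdef
  have hPval : P = 1/(2*r*(1+r)^2) := by
    rw [hPdef, ← hrdef]
    exact psi1_sq hr.le
  have hPpos : 0 < P := psi1_pos hQ
  -- the jump integrand and its bounds
  set m : U → ℝ := fun u => min (‖c x k u - c z k u‖ ^ 2) (4 * r * ‖c x k u - c z k u‖)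
    with hmdef
  set J : U → ℝ := fun u =>
    G d (w + (c x k u - c z k u)) - G d w - ⟪gradG d w, c x k u - c z k u⟫ with hJdef
  have hJup : ∀ u, J u ≤ P * m u := by
    intro u
    have := (G_taylor hw (c x k u - c z k u)).1
    rw [hPval]
    exact this
  have hJabs : ∀ u, |J u| ≤ (1 + 1/(2*r)) * m u := by
    intro u
    exact (G_taylor hw (c x k u - c z k u)).2
  have hmeasJ : AEStronglyMeasurable J ν := by
    have hc : Measurable (fun u => c x k u - c z k u) := (hmeas x k).sub (hmeas z k)
    have hGcont : Continuous (G d) := by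
      apply Continuous.div continuous_norm (continuous_const.add continuous_norm)
      intro v
      have := norm_nonneg v
      exact (by linarith : (0:ℝ) < 1 + ‖v‖).ne'
    apply Measurable.aestronglyMeasurable
    apply Measurable.sub
    apply Measurable.sub
    · exact hGcont.measurable.comp (measurable_const.add hc)
    · exact measurable_const
    · exact ((innerSL ℝ (gradG d w)).continuous.measurable).comp hc
  have hJint : Integrable J ν := by
    apply (hint.const_mul (1 + 1/(2*r))).mono' hmeasJ
    exact ae_of_all _ fun u => by
      rw [Real.norm_eq_abs]
      exact hJabs u
  have hJle : (∫ u, J u ∂ν) ≤ P * ∫ u, m u ∂ν := by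
    calc (∫ u, J u ∂ν) ≤ ∫ u, P * m u ∂ν :=
          integral_mono hJint (hint.const_mul P) hJup
      _ = P * ∫ u, m u ∂ν := integral_const_mul P _
  -- trace term
  have htr : Matrix.trace ((σ x k - σ z k) * (σ x k - σ z k)ᵀ * hessG d w)
      = 4 * psi2 (‖w‖ ^ 2) * ∑ j, (∑ i, (σ x k - σ z k) i j * w i) ^ 2
        + 2 * P * ∑ i, ∑ j, ((σ x k - σ z k) i j) ^ 2 :=
    trace_eval _ _ _ _ _ (fun i j => hessG_eq hw i j)
  have hsub : ∀ i j, (σ x k - σ z k) i j = σ x k i j - σ z k i j := fun i j => rfl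
  have htrle : (1/2) * Matrix.trace ((σ x k - σ z k) * (σ x k - σ z k)ᵀ * hessG d w)
      ≤ P * ∑ i, ∑ j, (σ x k i j - σ z k i j) ^ 2 := by
    rw [htr]
    have hS : 0 ≤ ∑ j, (∑ i, (σ x k - σ z k) i j * w i) ^ 2 :=
      Finset.sum_nonneg fun _ _ => sq_nonneg _
    have hψ2 := psi2_nonpos hQ
    have hTeq : (∑ i, ∑ j, ((σ x k - σ z k) i j) ^ 2)
        = ∑ i, ∑ j, (σ x k i j - σ z k i j) ^ 2 := by
      exact Finset.sum_congr rfl fun i _ => Finset.sum_congr rfl fun j _ => by rw [hsub]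
    rw [hTeq]
    nlinarith [mul_nonneg (neg_nonneg.2 hψ2) hS]
  -- gradient term
  have hgr : ⟪b x k - b z k, gradG d w⟫ = P * (2 * ⟪w, b x k - b z k⟫) := by
    rw [gradG_eq hw, real_inner_smul_right, real_inner_comm, ← hPdef]
    ring
  -- rewrite the integral in the goal
  have hintegrand : (∫ u, (G d (w + c x k u - c z k u) - G d w -
        ⟪gradG d w, c x k u - c z k u⟫) ∂ν) = ∫ u, J u ∂ν := by
    apply integral_congr_ae
    apply ae_of_all
    intro u
    rw [hJdef]
    simp only [add_sub_assoc]
  -- final assembly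
  have hFr : F r = r / (1 + r) := rfl
  have hmono : P * ((∫ u, m u ∂ν) + 2 * ⟪w, b x k - b z k⟫
      + ∑ i, ∑ j, (σ x k i j - σ z k i j) ^ 2) ≤ P * (2 * κ * r * ϱ r) :=
    mul_le_mul_of_nonneg_left hbound hPpos.le
  have hPkr : P * (2 * κ * r * ϱ r) ≤ κ * ϱ (F r) := by
    rw [hPval, hFr]
    have hϱr := hϱF r hr
    have h2 : (1/(2*r*(1+r)^2)) * (2*κ*r*ϱ r) = κ * ϱ r / (1+r)^2 := by
      field_simp
    rw [h2, div_le_iff₀ (pow_pos h1r 2)]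
    calc κ * ϱ r ≤ κ * ((1+r)^2 * ϱ (r/(1+r))) :=
          mul_le_mul_of_nonneg_left hϱr hκ.le
      _ = κ * ϱ (r/(1+r)) * (1+r)^2 := by ring
  calc (1/2) * Matrix.trace ((σ x k - σ z k) * (σ x k - σ z k)ᵀ * hessG d w) +
        ⟪b x k - b z k, gradG d w⟫ +
        (∫ u, (G d (w + c x k u - c z k u) - G d w -
          ⟪gradG d w, c x k u - c z k u⟫) ∂ν) +
        (∑' l : {l : ℕ+ // l ≠ k}, |q k l x - q k l z|)
      ≤ P * (∑ i, ∑ j, (σ x k i j - σ z k i j) ^ 2) + P * (2 * ⟪w, b x k - b z k⟫)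
        + P * (∫ u, m u ∂ν) + κ * ϱ (F r) := by
        rw [hintegrand, hgr]
        gcongr
    _ = P * ((∫ u, m u ∂ν) + 2 * ⟪w, b x k - b z k⟫
        + ∑ i, ∑ j, (σ x k i j - σ z k i j) ^ 2) + κ * ϱ (F r) := by ring
    _ ≤ κ * ϱ (F r) + κ * ϱ (F r) := by
        have := le_trans hmono hPkr
        linarith
    _ = 2 * κ * ϱ (F r) := by ring
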